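/- Let n ≥ 1, s ∈ (0,1). Suppose u ∈ L^1_loc(ℝ^n × ℝ) satisfies ∫∫ |u(y,τ)|/(1 + |y|^{n+2+2s} + |τ|^{n/2+1+s}) dy dτ < ∞. Define E(x,t,R) = ∫∫_{(ℝ^n×(-∞,t))\Q_R} |u(y,τ)| M(x-y, t-τ) dy dτ, where Q_R = {(y,τ) : |y| ≤ R, |τ| ≤ R²}. Then lim_{R→∞} sup_{(x,t) ∈ Q_{R/2}} E(x,t,R) = 0. -/

import Mathlib

open MeasureTheory Real

noncomputable def heatM (n : ℕ) (s c : ℝ) (x : EuclideanSpace ℝ (Fin n)) (t : ℝ) : ℝ :=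
  c * t ^ (-((n : ℝ) / 2 + 1 + s)) * Real.exp (-‖x‖ ^ 2 / (4 * t))

lemma sq_rpow' {x a : ℝ} (hx : 0 ≤ x) : (x ^ 2) ^ a = x ^ (2 * a) := by
  rw [← Real.rpow_natCast x 2, ← Real.rpow_mul hx]
  norm_num

lemma boundB' {a : ℝ} (ha : 0 < a) :
    ∃ C : ℝ, 1 ≤ C ∧ ∀ z : ℝ, 0 ≤ z → z ^ a * Real.exp (-z / 4) ≤ C := by
  have htend : Filter.Tendsto (fun z : ℝ => z ^ a * Real.exp (-z / 4))
      Filter.atTop (nhds 0) := by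
    have h := tendsto_rpow_mul_exp_neg_mul_atTop_nhds_zero a (1/4) (by norm_num)
    refine h.congr fun z => ?_
    rw [show -(1/4 : ℝ) * z = -z/4 by ring]
  have hev : ∀ᶠ z in Filter.atTop, z ^ a * Real.exp (-z/4) ≤ 1 :=
    htend.eventually (eventually_le_nhds zero_lt_one)
  obtain ⟨z₀, hz₀⟩ := Filter.eventually_atTop.1 hev
  have hcont : Continuous fun z : ℝ => z ^ a * Real.exp (-z/4) :=
    (Real.continuous_rpow_const ha.le).mul (by continuity)
  obtain ⟨zm, _, hmax⟩ := isCompact_Icc.exists_isMaxOn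
    (Set.nonempty_Icc.2 (le_max_right z₀ 0)) hcont.continuousOn
  refine ⟨max (zm ^ a * Real.exp (-zm/4)) 1, le_max_right _ _, fun z hz => ?_⟩
  rcases le_or_gt z (max z₀ 0) with h | h
  · exact le_trans (hmax ⟨hz, h⟩) (le_max_left _ _)
  · exact le_trans (hz₀ z (le_trans (le_max_left _ _) h.le)) (le_max_right _ _)

lemma heat_bound' {a cns Ca : ℝ} (ha : 0 < a) (hcns : 0 < cns) (hCa : 1 ≤ Ca)
    (hB : ∀ z : ℝ, 0 ≤ z → z ^ a * Real.exp (-z / 4) ≤ Ca)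
    {r T : ℝ} (hr : 0 ≤ r) (hT : 0 < T) :
    cns * T ^ (-a) * Real.exp (-r ^ 2 / (4 * T)) ≤
      cns * (2 * Ca) / (r ^ (2 * a) + T ^ a) := by
  have hTa : 0 < T ^ a := Real.rpow_pos_of_pos hT a
  have hL : 0 < r ^ (2 * a) + T ^ a :=
    add_pos_of_nonneg_of_pos (Real.rpow_nonneg hr _) hTa
  rw [le_div_iff₀ hL]
  have e1 : T ^ (-a) * T ^ a = 1 := by
    rw [← Real.rpow_add hT]; simp
  have e2 : T ^ (-a) * r ^ (2 * a) = (r ^ 2 / T) ^ a := by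
    rw [Real.div_rpow (sq_nonneg r) hT.le, ← sq_rpow' hr, Real.rpow_neg hT.le]
    ring
  have hexp : Real.exp (-r ^ 2 / (4 * T)) ≤ 1 := by
    rw [Real.exp_le_one_iff]
    have h0 : 0 ≤ r ^ 2 / (4 * T) := by positivity
    rw [neg_div]; linarith
  have hmain : (r ^ 2 / T) ^ a * Real.exp (-r ^ 2 / (4 * T)) ≤ Ca := by
    have h := hB (r ^ 2 / T) (by positivity)
    have harg : -(r ^ 2 / T) / 4 = -r ^ 2 / (4 * T) := by
      ring
    rwa [harg] at h
  have h2 : T ^ (-a) * Real.exp (-r ^ 2 / (4 * T)) * (r ^ (2 * a) + T ^ a) ≤ 2 * Ca := by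
    have expand : T ^ (-a) * Real.exp (-r ^ 2 / (4 * T)) * (r ^ (2 * a) + T ^ a)
        = (r ^ 2 / T) ^ a * Real.exp (-r ^ 2 / (4 * T))
          + (T ^ (-a) * T ^ a) * Real.exp (-r ^ 2 / (4 * T)) := by
      rw [← e2]; ring
    rw [expand, e1, one_mul]
    linarith
  calc cns * T ^ (-a) * Real.exp (-r ^ 2 / (4 * T)) * (r ^ (2 * a) + T ^ a)
      = cns * (T ^ (-a) * Real.exp (-r ^ 2 / (4 * T)) * (r ^ (2 * a) + T ^ a)) := by ring
    _ ≤ cns * (2 * Ca) := mul_le_mul_of_nonneg_left h2 hcns.le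

lemma geom' {a R Y r t τ : ℝ} (ha : 0 < a) (hR : 1 ≤ R) (hY : 0 ≤ Y) (hr : 0 ≤ r)
    (hr1 : Y - R / 2 ≤ r) (ht : |t| ≤ R ^ 2 / 4) (hτt : τ < t)
    (hout : ¬(Y ≤ R ∧ |τ| ≤ R ^ 2)) :
    1 + Y ^ (2 * a) + |τ| ^ a ≤
      3 * max ((2:ℝ) ^ (2 * a)) ((4 / 3 : ℝ) ^ a) * (r ^ (2 * a) + (t - τ) ^ a) := by
  set K := max ((2:ℝ) ^ (2 * a)) ((4 / 3 : ℝ) ^ a) with hKdef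
  have hT0 : 0 < t - τ := by linarith
  have hLr : 0 ≤ r ^ (2 * a) := Real.rpow_nonneg hr _
  have hLT : 0 ≤ (t - τ) ^ a := Real.rpow_nonneg hT0.le _
  have hK2 : (2:ℝ) ^ (2 * a) ≤ K := le_max_left _ _
  have hK43 : (4 / 3 : ℝ) ^ a ≤ K := le_max_right _ _
  have hK0 : 0 ≤ K := le_trans (Real.rpow_nonneg (by norm_num) _) hK2
  have hR2 : (1:ℝ) ≤ R ^ 2 := by nlinarith
  have ht' : t ≤ R ^ 2 / 4 := le_trans (le_abs_self t) ht
  have ht'' : -(R ^ 2 / 4) ≤ t := neg_le_of_abs_le ht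
  have key1 : ¬ Y ≤ R → ∀ Z : ℝ, 0 ≤ Z → Z ≤ 2 * r →
      Z ^ (2 * a) ≤ K * (r ^ (2 * a) + (t - τ) ^ a) := by
    intro _ Z hZ0 hZ
    calc Z ^ (2 * a) ≤ (2 * r) ^ (2 * a) :=
          Real.rpow_le_rpow hZ0 hZ (by positivity)
      _ = 2 ^ (2 * a) * r ^ (2 * a) := Real.mul_rpow (by norm_num) hr
      _ ≤ K * (r ^ (2 * a) + (t - τ) ^ a) := by
          nlinarith [mul_nonneg (sub_nonneg.2 hK2) hLr, mul_nonneg hK0 hLT]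
  have key2 : R ^ 2 < |τ| → ∀ Z : ℝ, 0 ≤ Z → Z ≤ (4 / 3) * (t - τ) →
      Z ^ a ≤ K * (r ^ (2 * a) + (t - τ) ^ a) := by
    intro _ Z hZ0 hZ
    calc Z ^ a ≤ ((4 / 3) * (t - τ)) ^ a := Real.rpow_le_rpow hZ0 hZ ha.le
      _ = (4 / 3 : ℝ) ^ a * (t - τ) ^ a := Real.mul_rpow (by norm_num) hT0.le
      _ ≤ K * (r ^ (2 * a) + (t - τ) ^ a) := by
          nlinarith [mul_nonneg (sub_nonneg.2 hK43) hLT, mul_nonneg hK0 hLr]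
  by_cases hτR : |τ| ≤ R ^ 2
  · have hYR : ¬ Y ≤ R := fun h => hout ⟨h, hτR⟩
    push_neg at hYR
    have h2r : R ≤ 2 * r := by linarith
    have key := key1 (by linarith)
    have h1 : (1:ℝ) ≤ K * (r ^ (2 * a) + (t - τ) ^ a) := by
      have h := key 1 zero_le_one (by linarith)
      rwa [Real.one_rpow] at h
    have hy := key Y hY (by linarith)
    have hτb : |τ| ^ a ≤ K * (r ^ (2 * a) + (t - τ) ^ a) := by
      have h := key R (by linarith) h2r
      have h' : |τ| ^ a ≤ R ^ (2 * a) := by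
        calc |τ| ^ a ≤ (R ^ 2) ^ a :=
              Real.rpow_le_rpow (abs_nonneg τ) hτR ha.le
          _ = R ^ (2 * a) := sq_rpow' (by linarith)
      linarith
    linarith
  · push_neg at hτR
    have hτ0 : τ < 0 := by
      by_contra h
      push_neg at h
      rw [abs_of_nonneg h] at hτR
      linarith
    have habs : |τ| = -τ := abs_of_neg hτ0
    have h34 : (3 / 4) * |τ| ≤ t - τ := by
      rw [habs]; linarith [hτR, habs ▸ hτR]
    have hτ1 : (1:ℝ) ≤ |τ| := by linarith
    have key := key2 hτR
    have h1 : (1:ℝ) ≤ K * (r ^ (2 * a) + (t - τ) ^ a) := by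
      have h := key 1 zero_le_one (by linarith)
      rwa [Real.one_rpow] at h
    have hτb := key |τ| (abs_nonneg τ) (by linarith)
    have hy : Y ^ (2 * a) ≤ K * (r ^ (2 * a) + (t - τ) ^ a) := by
      by_cases hYR : Y ≤ R
      · have h := key (Y ^ 2) (sq_nonneg Y) (by nlinarith)
        rwa [sq_rpow' hY] at h
      · push_neg at hYR
        exact key1 (by linarith) Y hY (by linarith)
    linarith

theorem stmt15 (n : ℕ) (hn : 1 ≤ n) (s : ℝ) (hs : s ∈ Set.Ioo (0 : ℝ) 1)
    (cns : ℝ) (hcns : 0 < cns)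
    (u : EuclideanSpace ℝ (Fin n) × ℝ → ℝ)
    (hu : MeasureTheory.LocallyIntegrable u volume)
    (hint : (∫⁻ p : EuclideanSpace ℝ (Fin n) × ℝ,
        ENNReal.ofReal (|u p| / (1 + ‖p.1‖ ^ ((n : ℝ) + 2 + 2 * s)
          + |p.2| ^ ((n : ℝ) / 2 + 1 + s)))) < ⊤) :
    ∀ ε : ℝ, 0 < ε → ∃ R₀ : ℝ, ∀ R ≥ R₀, ∀ (x : EuclideanSpace ℝ (Fin n)) (t : ℝ),
      ‖x‖ ≤ R / 2 → |t| ≤ R ^ 2 / 4 →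
      (∫ p in {p : EuclideanSpace ℝ (Fin n) × ℝ |
          p.2 < t ∧ ¬(‖p.1‖ ≤ R ∧ |p.2| ≤ R ^ 2)},
        |u p| * heatM n s cns (x - p.1) (t - p.2)) < ε := by
  intro ε hε
  have ha : 0 < (n : ℝ) / 2 + 1 + s := by
    have h0 : (0:ℝ) ≤ (n:ℝ) / 2 := by positivity
    have hs0 := hs.1
    linarith
  have h2a : (n : ℝ) + 2 + 2 * s = 2 * ((n : ℝ) / 2 + 1 + s) := by ring
  obtain ⟨Ca, hCa1, hCa⟩ := boundB' ha
  set K₁ : ℝ := max ((2:ℝ) ^ (2 * ((n : ℝ) / 2 + 1 + s))) ((4 / 3 : ℝ) ^ ((n : ℝ) / 2 + 1 + s)) with hK₁def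
  have hK₁pos : 0 < K₁ :=
    lt_of_lt_of_le (Real.rpow_pos_of_pos (by norm_num) _) (le_max_left _ _)
  set K₂ : ℝ := cns * (2 * Ca) * (3 * K₁) with hK₂def
  have hK₂pos : 0 < K₂ := by positivity
  -- the weight density
  set g : EuclideanSpace ℝ (Fin n) × ℝ → ENNReal := fun p =>
    ENNReal.ofReal (|u p| / (1 + ‖p.1‖ ^ ((n : ℝ) + 2 + 2 * s)
      + |p.2| ^ ((n : ℝ) / 2 + 1 + s))) with hgdef
  set ν : Measure (EuclideanSpace ℝ (Fin n) × ℝ) := volume.withDensity g with hνdef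
  have hνfin : IsFiniteMeasure ν := isFiniteMeasure_withDensity hint.ne
  -- the decreasing sequence of tail sets
  set S : ℕ → Set (EuclideanSpace ℝ (Fin n) × ℝ) := fun k =>
    {p | ¬(‖p.1‖ ≤ (k:ℝ) ∧ |p.2| ≤ (k:ℝ) ^ 2)} with hSdef
  have hSm : ∀ k, MeasurableSet (S k) := by
    intro k
    have h2 : MeasurableSet {p : EuclideanSpace ℝ (Fin n) × ℝ | ‖p.1‖ ≤ (k:ℝ)} :=
      measurableSet_le continuous_fst.norm.measurable measurable_const
    have h3 : MeasurableSet {p : EuclideanSpace ℝ (Fin n) × ℝ | |p.2| ≤ (k:ℝ) ^ 2} :=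
      measurableSet_le measurable_snd.abs measurable_const
    have : S k = ({p : EuclideanSpace ℝ (Fin n) × ℝ | ‖p.1‖ ≤ (k:ℝ)} ∩ {p : EuclideanSpace ℝ (Fin n) × ℝ | |p.2| ≤ (k:ℝ) ^ 2})ᶜ := by
      ext p
      simp only [hSdef, Set.mem_setOf_eq, Set.mem_compl_iff, Set.mem_inter_iff]
    rw [this]
    exact (h2.inter h3).compl
  have hanti : Antitone S := by
    intro k m hkm p hp
    simp only [hSdef, Set.mem_setOf_eq] at hp ⊢
    intro ⟨h1, h2⟩
    exact hp ⟨le_trans h1 (by exact_mod_cast hkm),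
      le_trans h2 (by
        have : (k:ℝ) ≤ (m:ℝ) := by exact_mod_cast hkm
        nlinarith [norm_nonneg p.1, le_trans (norm_nonneg p.1) h1])⟩
  have hiInter : (⋂ k, S k) = ∅ := by
    ext p
    simp only [Set.mem_iInter, Set.mem_empty_iff_false, iff_false, not_forall]
    obtain ⟨k, hk⟩ := exists_nat_gt (max ‖p.1‖ |p.2|)
    refine ⟨k + 1, ?_⟩
    simp only [hSdef, Set.mem_setOf_eq, not_not, not_forall]
    have hk1 : max ‖p.1‖ |p.2| < (k:ℝ) + 1 := by
      push_cast; linarith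
    have hknn : (0:ℝ) ≤ (k:ℝ) := Nat.cast_nonneg k
    constructor
    · push_cast
      exact le_trans (le_max_left _ _) hk1.le
    · push_cast
      nlinarith [le_trans (le_max_right _ _) hk1.le, abs_nonneg p.2]
  have htend : Filter.Tendsto (fun k => ν (S k)) Filter.atTop (nhds 0) := by
    have h := tendsto_measure_iInter_atTop (μ := ν)
      (fun k => (hSm k).nullMeasurableSet) hanti ⟨0, measure_ne_top ν _⟩
    rw [hiInter] at h
    simpa [Function.comp_def] using h
  set δ : ENNReal := ENNReal.ofReal (ε / K₂) with hδdef
  have hδpos : 0 < δ := ENNReal.ofReal_pos.2 (by positivity)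
  obtain ⟨k, hk⟩ := (htend.eventually (Iio_mem_nhds hδpos)).exists
  refine ⟨max (k:ℝ) 1, fun R hR x t hx ht => ?_⟩
  have hR1 : (1:ℝ) ≤ R := le_trans (le_max_right _ _) hR
  have hRk : (k:ℝ) ≤ R := le_trans (le_max_left _ _) hR
  set T : Set (EuclideanSpace ℝ (Fin n) × ℝ) :=
    {p : EuclideanSpace ℝ (Fin n) × ℝ | p.2 < t ∧ ¬(‖p.1‖ ≤ R ∧ |p.2| ≤ R ^ 2)} with hTdef
  have hT : MeasurableSet T := by
    have h1 : MeasurableSet {p : EuclideanSpace ℝ (Fin n) × ℝ | p.2 < t} :=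
      measurableSet_lt measurable_snd measurable_const
    have h2 : MeasurableSet {p : EuclideanSpace ℝ (Fin n) × ℝ | ‖p.1‖ ≤ R} :=
      measurableSet_le continuous_fst.norm.measurable measurable_const
    have h3 : MeasurableSet {p : EuclideanSpace ℝ (Fin n) × ℝ | |p.2| ≤ R ^ 2} :=
      measurableSet_le measurable_snd.abs measurable_const
    have : T = {p : EuclideanSpace ℝ (Fin n) × ℝ | p.2 < t} ∩
        ({p : EuclideanSpace ℝ (Fin n) × ℝ | ‖p.1‖ ≤ R} ∩ {p : EuclideanSpace ℝ (Fin n) × ℝ | |p.2| ≤ R ^ 2})ᶜ := by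
      ext p
      simp only [hTdef, Set.mem_setOf_eq, Set.mem_inter_iff, Set.mem_compl_iff]
    rw [this]
    exact h1.inter (h2.inter h3).compl
  have hTS : T ⊆ S k := by
    intro p hp
    simp only [hTdef, Set.mem_setOf_eq] at hp
    simp only [hSdef, Set.mem_setOf_eq]
    intro ⟨h1, h2⟩
    exact hp.2 ⟨le_trans h1 hRk, le_trans h2 (pow_le_pow_left₀ (Nat.cast_nonneg k) hRk 2)⟩
  -- pointwise bound
  have hpt : ∀ p ∈ T, |u p| * heatM n s cns (x - p.1) (t - p.2) ≤
      K₂ * (|u p| / (1 + ‖p.1‖ ^ ((n : ℝ) + 2 + 2 * s)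
        + |p.2| ^ ((n : ℝ) / 2 + 1 + s))) := by
    intro p hp
    simp only [hTdef, Set.mem_setOf_eq] at hp
    obtain ⟨hpt2, hout⟩ := hp
    have hT0 : 0 < t - p.2 := by linarith
    set r : ℝ := ‖x - p.1‖ with hrdef
    have hr0 : 0 ≤ r := norm_nonneg _
    have hw : 1 + ‖p.1‖ ^ ((n : ℝ) + 2 + 2 * s) + |p.2| ^ ((n : ℝ) / 2 + 1 + s)
        = 1 + ‖p.1‖ ^ (2 * ((n : ℝ) / 2 + 1 + s)) + |p.2| ^ ((n : ℝ) / 2 + 1 + s) := by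
      rw [h2a]
    have hgeom : 1 + ‖p.1‖ ^ (2 * ((n : ℝ) / 2 + 1 + s)) + |p.2| ^ ((n : ℝ) / 2 + 1 + s) ≤
        3 * K₁ * (r ^ (2 * ((n : ℝ) / 2 + 1 + s)) + (t - p.2) ^ ((n : ℝ) / 2 + 1 + s)) := by
      refine geom' ha hR1 (norm_nonneg _) hr0 ?_ ht hpt2 hout
      have := abs_norm_sub_norm_le x p.1
      have h1 : ‖p.1‖ - ‖x‖ ≤ ‖x - p.1‖ := by
        rw [abs_le] at this; linarith [this.1]
      linarith
    have hheat : heatM n s cns (x - p.1) (t - p.2) ≤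
        cns * (2 * Ca) / (r ^ (2 * ((n : ℝ) / 2 + 1 + s)) + (t - p.2) ^ ((n : ℝ) / 2 + 1 + s)) := by
      have h := heat_bound' ha hcns hCa1 hCa hr0 hT0 (r := r)
      simpa [heatM] using h
    have hL : 0 < r ^ (2 * ((n : ℝ) / 2 + 1 + s)) + (t - p.2) ^ ((n : ℝ) / 2 + 1 + s) :=
      add_pos_of_nonneg_of_pos (Real.rpow_nonneg hr0 _)
        (Real.rpow_pos_of_pos hT0 _)
    have hwpos : 0 < 1 + ‖p.1‖ ^ (2 * ((n : ℝ) / 2 + 1 + s)) + |p.2| ^ ((n : ℝ) / 2 + 1 + s) := by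
      have h1 := Real.rpow_nonneg (norm_nonneg p.1) (2 * ((n : ℝ) / 2 + 1 + s))
      have h2 := Real.rpow_nonneg (abs_nonneg p.2) ((n : ℝ) / 2 + 1 + s)
      linarith
    have hfrac : cns * (2 * Ca) / (r ^ (2 * ((n : ℝ) / 2 + 1 + s)) + (t - p.2) ^ ((n : ℝ) / 2 + 1 + s)) ≤
        K₂ / (1 + ‖p.1‖ ^ (2 * ((n : ℝ) / 2 + 1 + s)) + |p.2| ^ ((n : ℝ) / 2 + 1 + s)) := by
      rw [div_le_div_iff₀ hL hwpos, hK₂def]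
      nlinarith [hgeom, mul_pos hcns (mul_pos two_pos (lt_of_lt_of_le one_pos hCa1))]
    have hheat2 : heatM n s cns (x - p.1) (t - p.2) ≤
        K₂ / (1 + ‖p.1‖ ^ (2 * ((n : ℝ) / 2 + 1 + s)) + |p.2| ^ ((n : ℝ) / 2 + 1 + s)) := le_trans hheat hfrac
    calc |u p| * heatM n s cns (x - p.1) (t - p.2)
        ≤ |u p| * (K₂ / (1 + ‖p.1‖ ^ (2 * ((n : ℝ) / 2 + 1 + s)) + |p.2| ^ ((n : ℝ) / 2 + 1 + s))) :=
          mul_le_mul_of_nonneg_left hheat2 (abs_nonneg _)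
      _ = K₂ * (|u p| / (1 + ‖p.1‖ ^ (2 * ((n : ℝ) / 2 + 1 + s)) + |p.2| ^ ((n : ℝ) / 2 + 1 + s))) := by ring
      _ = K₂ * (|u p| / (1 + ‖p.1‖ ^ ((n : ℝ) + 2 + 2 * s)
          + |p.2| ^ ((n : ℝ) / 2 + 1 + s))) := by rw [hw]
  -- the lintegral bound
  have hlint : (∫⁻ p in T, ENNReal.ofReal
      (|u p| * heatM n s cns (x - p.1) (t - p.2))) < ENNReal.ofReal ε := by
    have step1 : (∫⁻ p in T, ENNReal.ofReal
        (|u p| * heatM n s cns (x - p.1) (t - p.2))) ≤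
        ∫⁻ p in T, ENNReal.ofReal K₂ * g p := by
      refine lintegral_mono_ae (((ae_restrict_mem hT).mono fun p hp => ?_))
      rw [hgdef, ← ENNReal.ofReal_mul hK₂pos.le]
      exact ENNReal.ofReal_le_ofReal (hpt p hp)
    have step2 : (∫⁻ p in T, ENNReal.ofReal K₂ * g p)
        = ENNReal.ofReal K₂ * ∫⁻ p in T, g p :=
      lintegral_const_mul' _ _ ENNReal.ofReal_ne_top
    have step3 : (∫⁻ p in T, g p) = ν T := (withDensity_apply g hT).symm
    have step4 : ν T < δ := lt_of_le_of_lt (measure_mono hTS) hk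
    calc (∫⁻ p in T, ENNReal.ofReal
        (|u p| * heatM n s cns (x - p.1) (t - p.2)))
        ≤ ENNReal.ofReal K₂ * ν T := by rw [← step3, ← step2]; exact step1
      _ < ENNReal.ofReal K₂ * δ := by
          refine ENNReal.mul_lt_mul_right ?_ ENNReal.ofReal_ne_top step4
          simp [ENNReal.ofReal_eq_zero, not_le, hK₂pos]
      _ = ENNReal.ofReal ε := by
          rw [hδdef, ← ENNReal.ofReal_mul hK₂pos.le,
            mul_div_cancel₀ ε hK₂pos.ne']
  -- conclude
  by_cases hfi : IntegrableOn
      (fun p => |u p| * heatM n s cns (x - p.1) (t - p.2)) T volume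
  · have hnn : 0 ≤ᵐ[volume.restrict T]
        fun p => |u p| * heatM n s cns (x - p.1) (t - p.2) := by
      refine (ae_restrict_mem hT).mono fun p hp => ?_
      simp only [hTdef, Set.mem_setOf_eq] at hp
      have hT0 : 0 < t - p.2 := by linarith [hp.1]
      have : 0 ≤ heatM n s cns (x - p.1) (t - p.2) := by
        unfold heatM
        have := Real.rpow_nonneg hT0.le (-((n:ℝ)/2 + 1 + s))
        positivity
      positivity
    have heq := ofReal_integral_eq_lintegral_ofReal hfi hnn
    have hlt : ENNReal.ofReal (∫ p in T,
        |u p| * heatM n s cns (x - p.1) (t - p.2)) < ENNReal.ofReal ε := by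
      rw [heq]; exact hlint
    exact (ENNReal.ofReal_lt_ofReal_iff hε).1 hlt
  · rw [MeasureTheory.integral_undef hfi]
    exact hε
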